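/- Let P be a d-dimensional 0-1 matrix with at least two ones. There exists a constant C such that for every positive integer n: ex(n,F_{P,4},d+1) ≤ C · n · α(n) · ex(n,P,d). -/

import Mathlib

/-! ### Multidimensional 0-1 matrices, represented as the finsets of their one-entries -/

/-- `M` contains `P`: there are coordinatewise strictly increasing maps sending
every one of `P` to a one of `M`. -/
def MContains {d : ℕ} {mdims pdims : Fin d → ℕ}
    (M : Finset ((i : Fin d) → Fin (mdims i)))
    (P : Finset ((i : Fin d) → Fin (pdims i))) : Prop :=
  ∃ f : (i : Fin d) → (Fin (pdims i) → Fin (mdims i)),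
    (∀ i, StrictMono (f i)) ∧ ∀ x ∈ P, (fun i => f i (x i)) ∈ M

/-- `ex(n, P, d)`: the maximum number of ones in a `P`-avoiding `d`-dimensional
0-1 matrix all of whose dimension lengths equal `n`. -/
noncomputable def exSq (n : ℕ) {d : ℕ} {pdims : Fin d → ℕ}
    (P : Finset ((i : Fin d) → Fin (pdims i))) : ℕ :=
  sSup {k | ∃ M : Finset (Fin d → Fin n), ¬ MContains M P ∧ M.card = k}

/-- The groups `G 0, …, G (s-1)` form the structure of a `(P,s)`-formation:
each group has `P.card` ones, the tails (coordinates other than the first) of each group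
form one common set which is a copy of `P` under strictly increasing maps, and the first
coordinates of the groups are strictly ordered between groups. -/
def FormationGroups {d : ℕ} {pdims : Fin d → ℕ}
    (P : Finset ((i : Fin d) → Fin (pdims i))) (s : ℕ) {mdims : Fin (d+1) → ℕ}
    (G : Fin s → Finset ((i : Fin (d+1)) → Fin (mdims i))) : Prop :=
  (∀ a, (G a).card = P.card) ∧
  (∃ g : (i : Fin d) → (Fin (pdims i) → Fin (mdims i.succ)),
      (∀ i, StrictMono (g i)) ∧
      ∀ a, (G a).image Fin.tail = P.image (fun x => fun i => g i (x i))) ∧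
  (∀ a b : Fin s, a < b → ∀ p ∈ G a, ∀ q ∈ G b, p 0 < q 0)

/-- `M` is a `(P,s)`-formation, i.e. a member of `F_{P,s}`. -/
def IsFormation {d : ℕ} {pdims : Fin d → ℕ}
    (P : Finset ((i : Fin d) → Fin (pdims i))) (s : ℕ) {mdims : Fin (d+1) → ℕ}
    (M : Finset ((i : Fin (d+1)) → Fin (mdims i))) : Prop :=
  ∃ G : Fin s → Finset ((i : Fin (d+1)) → Fin (mdims i)),
    FormationGroups P s G ∧ M = Finset.univ.biUnion G

/-- `M` contains a `(P,s)`-formation, i.e. `M` contains some member of the family `F_{P,s}`. -/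
def ContainsFormation {d : ℕ} {pdims : Fin d → ℕ}
    (P : Finset ((i : Fin d) → Fin (pdims i))) (s : ℕ) {mdims : Fin (d+1) → ℕ}
    (M : Finset ((i : Fin (d+1)) → Fin (mdims i))) : Prop :=
  ∃ G : Fin s → Finset ((i : Fin (d+1)) → Fin (mdims i)),
    FormationGroups P s G ∧ ∀ a, G a ⊆ M

/-- `ex(n, F_{P,s}, d+1)`: the maximum number of ones in a `(d+1)`-dimensional 0-1 matrix
with all dimension lengths `n` avoiding every `(P,s)`-formation. -/
noncomputable def exFormation (n : ℕ) {d : ℕ} {pdims : Fin d → ℕ}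
    (P : Finset ((i : Fin d) → Fin (pdims i))) (s : ℕ) : ℕ :=
  sSup {k | ∃ M : Finset (Fin (d+1) → Fin n), ¬ ContainsFormation P s M ∧ M.card = k}

/-- Dimension lengths of a box whose first dimension has length `m` and whose
other `d` dimensions have length `n`. -/
def BoxDims (d m n : ℕ) : Fin (d+1) → ℕ := Fin.cons m (fun _ => n)

/-- `L` is a valid family of letters: pairwise disjoint nonempty sets of cells, each with
at least `k` cells all lying in a single 1-row. -/
def IsLetterFamily {d : ℕ} {mdims : Fin (d+1) → ℕ} (k : ℕ)
    (L : Finset (Finset ((i : Fin (d+1)) → Fin (mdims i)))) : Prop :=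
  (∀ S ∈ L, S.Nonempty) ∧
  (∀ S ∈ L, ∀ T ∈ L, S ≠ T → Disjoint S T) ∧
  (∀ S ∈ L, k ≤ S.card ∧ ∃ t : (i : Fin d) → Fin (mdims i.succ), ∀ p ∈ S, Fin.tail p = t)

/-- `lx_k(n, m, F_{P,s}, d+1)`. -/
noncomputable def lxFormation (n m : ℕ) {d : ℕ} {pdims : Fin d → ℕ}
    (P : Finset ((i : Fin d) → Fin (pdims i))) (s k : ℕ) : ℕ :=
  sSup {c | ∃ L : Finset (Finset ((i : Fin (d+1)) → Fin (BoxDims d m n i))),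
    IsLetterFamily k L ∧ ¬ ContainsFormation P s (L.biUnion id) ∧ L.card = c}

/-! ### general families of multidimensional matrices -/

/-- `M` avoids every member of the family `F`. -/
def AvoidsFam {d : ℕ} {mdims : Fin d → ℕ} (M : Finset ((i : Fin d) → Fin (mdims i)))
    (F : (pdims : Fin d → ℕ) → Set (Finset ((i : Fin d) → Fin (pdims i)))) : Prop :=
  ∀ pdims : Fin d → ℕ, ∀ P ∈ F pdims, ¬ MContains M P

/-- `ex(n, m, F, d)` with `d = e+1`. -/
noncomputable def exBox (n m e : ℕ)
    (F : (pdims : Fin (e+1) → ℕ) → Set (Finset ((i : Fin (e+1)) → Fin (pdims i)))) : ℕ :=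
  sSup {k | ∃ M : Finset ((i : Fin (e+1)) → Fin (BoxDims e m n i)),
    AvoidsFam M F ∧ M.card = k}

/-- `lx_k(n, m, F, d)` with `d = e+1`. -/
noncomputable def lxBox (n m e k : ℕ)
    (F : (pdims : Fin (e+1) → ℕ) → Set (Finset ((i : Fin (e+1)) → Fin (pdims i)))) : ℕ :=
  sSup {c | ∃ L : Finset (Finset ((i : Fin (e+1)) → Fin (BoxDims e m n i))),
    IsLetterFamily k L ∧ AvoidsFam (L.biUnion id) F ∧ L.card = c}

/-! ### 2-dimensional matrices (cells are (row, column) pairs) -/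

def Contains2 {m n a b : ℕ} (M : Finset (Fin m × Fin n)) (P : Finset (Fin a × Fin b)) : Prop :=
  ∃ f : Fin a → Fin m, ∃ g : Fin b → Fin n,
    StrictMono f ∧ StrictMono g ∧ ∀ p ∈ P, (f p.1, g p.2) ∈ M

def Avoids2Fam {m n : ℕ} (M : Finset (Fin m × Fin n))
    (F : (a : ℕ) → (b : ℕ) → Set (Finset (Fin a × Fin b))) : Prop :=
  ∀ a b : ℕ, ∀ P ∈ F a b, ¬ Contains2 M P

/-- `ex(n, m, F)` for a family `F` of 2-dimensional matrices: `m` rows, `n` columns. -/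
noncomputable def ex2 (n m : ℕ) (F : (a : ℕ) → (b : ℕ) → Set (Finset (Fin a × Fin b))) : ℕ :=
  sSup {k | ∃ M : Finset (Fin m × Fin n), Avoids2Fam M F ∧ M.card = k}

/-- letters in a 2-dimensional grid: pairwise disjoint nonempty sets of cells, each with
at least `k` cells all lying in a single column. -/
def IsLetterCol {m n : ℕ} (k : ℕ) (L : Finset (Finset (Fin m × Fin n))) : Prop :=
  (∀ S ∈ L, S.Nonempty) ∧
  (∀ S ∈ L, ∀ T ∈ L, S ≠ T → Disjoint S T) ∧
  (∀ S ∈ L, k ≤ S.card ∧ ∃ j : Fin n, ∀ p ∈ S, p.2 = j)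

/-- `A_t`: the 2×t 0-1 matrix with ones exactly where the coordinate sum is even. -/
def Aform (t : ℕ) : Finset (Fin 2 × Fin t) :=
  Finset.univ.filter (fun p => Even ((p.1 : ℕ) + (p.2 : ℕ)))

/-! ### Ackermann hierarchy and related functions -/

/-- `ackH j n` is `a_j(n)`: `a₁(n) = 2n` and `a_j(n)` is the `n`-fold iterate
of `a_{j-1}` applied to `1`. -/
def ackH : ℕ → ℕ → ℕ
  | 0, n => n
  | 1, n => 2 * n
  | j+2, n => (ackH (j+1))^[n] 1

/-- `α_j(n) = min {k ≥ 1 : a_j(k) ≥ n}`. -/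
noncomputable def alphIdx (j n : ℕ) : ℕ := sInf {k | 1 ≤ k ∧ n ≤ ackH j k}

/-- inverse diagonal Ackermann function `α(n) = min {k ≥ 1 : A(k,k) ≥ n}`. -/
noncomputable def alphA (n : ℕ) : ℕ := sInf {k | 1 ≤ k ∧ n ≤ ack k k}

/-- `R_s(j)`. -/
def Rform : ℕ → ℕ → ℤ
  | 0, _ => 0
  | 1, _ => 2
  | 2, _ => 3
  | _+3, 0 => 0
  | _+3, 1 => 0
  | t+3, 2 => 2 ^ (t+2) + 1
  | t+3, i+3 =>
      Rform (t+3) (i+2) * Rform (t+1) (i+3) + 2 * Rform (t+2) (i+3)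
        - 3 * Rform (t+1) (i+3) - Rform (t+3) (i+2) + 2
termination_by s j => (s, j)

/-- `D_s(j)`. -/
def Dform : ℕ → ℕ → ℤ
  | 0, _ => 0
  | 1, _ => 0
  | 2, _ => 2
  | _+3, 0 => 0
  | _+3, 1 => 0
  | t+3, 2 => 2 ^ (t+2) + 2 ^ (t+1) - 1
  | t+3, i+3 =>
      2 * Dform (t+2) (i+3) + (Dform (t+1) (i+3) + 1) * (Rform (t+3) (i+2) - 3)
        + Dform (t+3) (i+2) - Rform (t+3) (i+2) + 1
termination_by s j => (s, j)

/-- The ones of the 2-dimensional matrix `M` contain a doubled `(r,s)`-formation. -/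
def ContainsDoubled (r s : ℕ) {m n : ℕ} (M : Finset (Fin m × Fin n)) : Prop :=
  ∃ S ⊆ M, ∃ b : Fin (s+1) → ℕ, Monotone b ∧ b 0 = 0 ∧ b (Fin.last s) = m ∧
    ∃ C : Finset (Fin n), C.card = r ∧ (∀ p ∈ S, p.2 ∈ C) ∧
      S.card = r * (2 * s - 2) ∧
      ∀ c ∈ C, ∀ t : Fin s,
        (S.filter (fun p => p.2 = c ∧ b t.castSucc ≤ (p.1 : ℕ) ∧ (p.1 : ℕ) < b t.succ)).card
          = if (t : ℕ) = 0 ∨ (t : ℕ) = s - 1 then 1 else 2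

set_option linter.unusedSectionVars false

open Finset

section Core

variable {τ : Type*} [DecidableEq τ]

/-- row `t` has a cell in `S` at position `≤ c1` and one at position `> c1`:
two ordered "windows". -/
def Blk2 (S : Finset (ℕ × τ)) (R : Finset τ) : Prop :=
  ∃ c1 : ℕ, ∀ t ∈ R,
    (∃ x, (x, t) ∈ S ∧ x ≤ c1) ∧ (∃ x, (x, t) ∈ S ∧ c1 < x)

def Blk3 (S : Finset (ℕ × τ)) (R : Finset τ) : Prop :=
  ∃ c1 c2 : ℕ, c1 ≤ c2 ∧ ∀ t ∈ R,
    (∃ x, (x, t) ∈ S ∧ x ≤ c1) ∧ (∃ x, (x, t) ∈ S ∧ c1 < x ∧ x ≤ c2) ∧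
    (∃ x, (x, t) ∈ S ∧ c2 < x)

def Blk4 (S : Finset (ℕ × τ)) (R : Finset τ) : Prop :=
  ∃ c1 c2 c3 : ℕ, c1 ≤ c2 ∧ c2 ≤ c3 ∧ ∀ t ∈ R,
    (∃ x, (x, t) ∈ S ∧ x ≤ c1) ∧ (∃ x, (x, t) ∈ S ∧ c1 < x ∧ x ≤ c2) ∧
    (∃ x, (x, t) ∈ S ∧ c2 < x ∧ x ≤ c3) ∧ (∃ x, (x, t) ∈ S ∧ c3 < x)

def GoodCfg (Danger : Finset τ → Prop) (S : Finset (ℕ × τ)) : Prop :=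
  ∀ R : Finset τ, Danger R → ¬ Blk4 S R

lemma Blk4.mono {S T : Finset (ℕ × τ)} {R : Finset τ} (hST : S ⊆ T)
    (h : Blk4 S R) : Blk4 T R := by
  obtain ⟨c1, c2, c3, h12, h23, h4⟩ := h
  refine ⟨c1, c2, c3, h12, h23, fun t ht => ?_⟩
  obtain ⟨⟨x1, hx1, e1⟩, ⟨x2, hx2, e2⟩, ⟨x3, hx3, e3⟩, ⟨x4, hx4, e4⟩⟩ := h4 t ht
  exact ⟨⟨x1, hST hx1, e1⟩, ⟨x2, hST hx2, e2⟩, ⟨x3, hST hx3, e3⟩, ⟨x4, hST hx4, e4⟩⟩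

lemma GoodCfg.mono {Danger : Finset τ → Prop} {S T : Finset (ℕ × τ)}
    (h : GoodCfg Danger T) (hST : S ⊆ T) : GoodCfg Danger S :=
  fun R hR hB => h R hR (hB.mono hST)

/-- trivial bound: positions in a window of length `ℓ`. -/
lemma triv_bound (T : Finset (ℕ × τ)) (y₀ ℓ : ℕ)
    (hw : ∀ c ∈ T, y₀ ≤ c.1 ∧ c.1 < y₀ + ℓ) :
    T.card ≤ ℓ * (T.image Prod.snd).card := by
  have hsub : T ⊆ (Finset.Ico y₀ (y₀ + ℓ)) ×ˢ (T.image Prod.snd) := by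
    intro c hc
    rw [Finset.mem_product, Finset.mem_Ico]
    exact ⟨⟨(hw c hc).1, (hw c hc).2⟩, Finset.mem_image_of_mem _ hc⟩
  calc T.card ≤ _ := Finset.card_le_card hsub
    _ = ℓ * (T.image Prod.snd).card := by
        rw [Finset.card_product, Nat.card_Ico, Nat.add_sub_cancel_left]

end Core

section Letters

variable {τ : Type*} [DecidableEq τ] {Danger : Finset τ → Prop} {E : ℕ}

lemma card_fixed_fst (F : Finset (ℕ × τ)) (x : ℕ) (h : ∀ c ∈ F, c.1 = x) :
    F.card = (F.image Prod.snd).card := by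
  rw [Finset.card_image_of_injOn]
  intro c hc c' hc' hsnd
  have := h c hc; have := h c' hc'
  exact Prod.ext (by omega) hsnd

lemma pos_count (HE : ∀ W : Finset τ, (∀ R ⊆ W, ¬ Danger R) → W.card ≤ E)
    (T : Finset (ℕ × τ)) (y₀ ℓ : ℕ)
    (hw : ∀ c ∈ T, y₀ ≤ c.1 ∧ c.1 < y₀ + ℓ)
    (Mid : ℕ × τ → Prop) [DecidablePred Mid]
    (h : ∀ x : ℕ, ∀ R ⊆ ((T.filter fun c => Mid c ∧ c.1 = x).image Prod.snd), ¬ Danger R) :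
    (T.filter Mid).card ≤ E * ℓ := by
  have hmem : ∀ c ∈ T.filter Mid, c.1 ∈ Finset.Ico y₀ (y₀ + ℓ) := by
    intro c hc
    rw [Finset.mem_Ico]
    exact (hw c (Finset.mem_filter.mp hc).1)
  rw [Finset.card_eq_sum_card_fiberwise hmem]
  have hbd : ∀ x ∈ Finset.Ico y₀ (y₀ + ℓ),
      ((T.filter Mid).filter fun c => c.1 = x).card ≤ E := by
    intro x _
    have heq : (T.filter Mid).filter (fun c => c.1 = x)
        = T.filter (fun c => Mid c ∧ c.1 = x) := by
      rw [Finset.filter_filter]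
    rw [heq, card_fixed_fst _ x (fun c hc => (Finset.mem_filter.mp hc).2.2)]
    exact HE _ (h x)
  calc ∑ x ∈ Finset.Ico y₀ (y₀ + ℓ), ((T.filter Mid).filter fun c => c.1 = x).card
      ≤ ∑ _x ∈ Finset.Ico y₀ (y₀ + ℓ), E := Finset.sum_le_sum hbd
    _ = E * ℓ := by rw [Finset.sum_const, Nat.card_Ico, Nat.add_sub_cancel_left,
        smul_eq_mul, mul_comm]

/-- 2-window-free configurations are tiny: `E` per position plus one initial
cell per row. -/
lemma l2_bound (HE : ∀ W : Finset τ, (∀ R ⊆ W, ¬ Danger R) → W.card ≤ E)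
    (T : Finset (ℕ × τ)) (y₀ ℓ : ℕ)
    (hw : ∀ c ∈ T, y₀ ≤ c.1 ∧ c.1 < y₀ + ℓ)
    (hfree : ∀ R : Finset τ, Danger R → ¬ Blk2 T R) :
    T.card ≤ E * ℓ + (T.image Prod.snd).card := by
  classical
  set NI : ℕ × τ → Prop := fun c => ∃ c' ∈ T, c'.2 = c.2 ∧ c'.1 < c.1 with hNI
  have hsplit := Finset.card_filter_add_card_filter_not (s := T) (p := NI)
  have h1 : (T.filter NI).card ≤ E * ℓ := by
    apply pos_count HE T y₀ ℓ hw NI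
    intro x R hR hDR
    refine hfree R hDR ⟨x - 1, fun t ht => ?_⟩
    obtain ⟨c, hc, hct⟩ := Finset.mem_image.mp (hR ht)
    have hc' := Finset.mem_filter.mp hc
    obtain ⟨⟨c', hc'T, hrow, hlt⟩, hcx⟩ := hc'.2
    constructor
    · refine ⟨c'.1, ?_, by omega⟩
      have h : c' = (c'.1, t) := Prod.ext rfl (by rw [hrow, hct])
      rw [← h]; exact hc'T
    · refine ⟨c.1, ?_, by omega⟩
      have h : c = (c.1, t) := Prod.ext rfl hct
      rw [← h]; exact hc'.1
  have h2 : (T.filter fun c => ¬ NI c).card ≤ (T.image Prod.snd).card := by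
    apply Finset.card_le_card_of_injOn Prod.snd
    · intro c hc
      exact Finset.mem_image_of_mem _ (Finset.mem_filter.mp hc).1
    · intro c hc c' hc' hsnd
      have hc1 := Finset.mem_filter.mp hc
      have hc2 := Finset.mem_filter.mp hc'
      rcases lt_trichotomy c.1 c'.1 with h | h | h
      · exact absurd ⟨c, hc1.1, hsnd, h⟩ hc2.2
      · exact Prod.ext h hsnd
      · exact absurd ⟨c', hc2.1, hsnd.symm, h⟩ hc1.2
  omega

/-- 3-window-free configurations: `E` per position plus two extreme cells
per row. -/
lemma l3_bound (HE : ∀ W : Finset τ, (∀ R ⊆ W, ¬ Danger R) → W.card ≤ E)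
    (T : Finset (ℕ × τ)) (y₀ ℓ : ℕ)
    (hw : ∀ c ∈ T, y₀ ≤ c.1 ∧ c.1 < y₀ + ℓ)
    (hfree : ∀ R : Finset τ, Danger R → ¬ Blk3 T R) :
    T.card ≤ E * ℓ + 2 * (T.image Prod.snd).card := by
  classical
  set NI : ℕ × τ → Prop := fun c => ∃ c' ∈ T, c'.2 = c.2 ∧ c'.1 < c.1 with hNI
  set NF : ℕ × τ → Prop := fun c => ∃ c' ∈ T, c'.2 = c.2 ∧ c.1 < c'.1 with hNF
  set Mid : ℕ × τ → Prop := fun c => NI c ∧ NF c with hMid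
  have hsplit := Finset.card_filter_add_card_filter_not (s := T) (p := Mid)
  have h1 : (T.filter Mid).card ≤ E * ℓ := by
    apply pos_count HE T y₀ ℓ hw Mid
    intro x R hR hDR
    refine hfree R hDR ⟨x - 1, x, by omega, fun t ht => ?_⟩
    obtain ⟨c, hc, hct⟩ := Finset.mem_image.mp (hR ht)
    have hc' := Finset.mem_filter.mp hc
    obtain ⟨⟨⟨c', hc'T, hrow, hlt⟩, ⟨c'', hc''T, hrow2, hlt2⟩⟩, hcx⟩ := hc'.2
    refine ⟨⟨c'.1, ?_, by omega⟩, ⟨c.1, ?_, by omega⟩, ⟨c''.1, ?_, by omega⟩⟩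
    · have h : c' = (c'.1, t) := Prod.ext rfl (by rw [hrow, hct])
      rw [← h]; exact hc'T
    · have h : c = (c.1, t) := Prod.ext rfl hct
      rw [← h]; exact hc'.1
    · have h : c'' = (c''.1, t) := Prod.ext rfl (by rw [hrow2, hct])
      rw [← h]; exact hc''T
  have h2 : (T.filter fun c => ¬ Mid c).card ≤ 2 * (T.image Prod.snd).card := by
    have hinj : Set.InjOn (fun c => (Prod.snd c, decide (NI c)))
        (T.filter fun c => ¬ Mid c) := by
      intro c hc c' hc' heq
      have hc1 := Finset.mem_filter.mp hc
      have hc2 := Finset.mem_filter.mp hc'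
      have hsnd : c.2 = c'.2 := congrArg Prod.fst heq
      have hbool : decide (NI c) = decide (NI c') := congrArg Prod.snd heq
      rcases lt_trichotomy c.1 c'.1 with h | h | h
      · -- c' has an earlier cell c, c has a later cell c'
        have hni : NI c' := ⟨c, hc1.1, hsnd, h⟩
        have hnf : NF c := ⟨c', hc2.1, hsnd.symm, h⟩
        have hnoni : ¬ NI c := fun hni' => hc1.2 ⟨hni', hnf⟩
        have hnonf' : ¬ NF c' := fun hnf' => hc2.2 ⟨hni, hnf'⟩
        simp [hni, hnoni] at hbool
      · exact Prod.ext h hsnd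
      · have hni : NI c := ⟨c', hc2.1, hsnd.symm, h⟩
        have hnf : NF c' := ⟨c, hc1.1, hsnd, h⟩
        have hnoni : ¬ NI c' := fun hni' => hc2.2 ⟨hni', hnf⟩
        simp [hni, hnoni] at hbool
    have hmap : ∀ c ∈ T.filter (fun c => ¬ Mid c),
        (Prod.snd c, decide (NI c)) ∈ (T.image Prod.snd) ×ˢ (Finset.univ : Finset Bool) := by
      intro c hc
      rw [Finset.mem_product]
      exact ⟨Finset.mem_image_of_mem _ (Finset.mem_filter.mp hc).1, Finset.mem_univ _⟩
    calc (T.filter fun c => ¬ Mid c).card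
        ≤ ((T.image Prod.snd) ×ˢ (Finset.univ : Finset Bool)).card :=
          Finset.card_le_card_of_injOn _ hmap hinj
      _ = 2 * (T.image Prod.snd).card := by
          rw [Finset.card_product]; simp [mul_comm]
  omega

end Letters

section Rec

variable {τ : Type*} [DecidableEq τ] {Danger : Finset τ → Prop} {E : ℕ}

lemma sum_card_le_of_disjoint (u : Finset τ) (P : ℕ) (f : ℕ → Finset τ)
    (hsub : ∀ i ∈ Finset.range P, f i ⊆ u)
    (hdisj : ∀ i ∈ Finset.range P, ∀ j ∈ Finset.range P, i ≠ j → Disjoint (f i) (f j)) :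
    ∑ i ∈ Finset.range P, (f i).card ≤ u.card := by
  rw [← Finset.card_biUnion hdisj]
  exact Finset.card_le_card (Finset.biUnion_subset.mpr hsub)

lemma tele_sum (f : ℕ → ℕ) (hf : ∀ i, f i ≤ f (i+1)) (P : ℕ) :
    ∑ i ∈ Finset.range P, (f (i+1) - f i) = f P - f 0 := by
  induction P with
  | zero => simp
  | succ P ih =>
    rw [Finset.sum_range_succ, ih]
    have h0P : f 0 ≤ f P := (monotone_nat_of_le_succ hf) (Nat.zero_le P)
    have := hf P
    omega

lemma rec_bound
    (HE : ∀ W : Finset τ, (∀ R ⊆ W, ¬ Danger R) → W.card ≤ E)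
    (μ m x₀ : ℕ) (hμ : 1 ≤ μ) (hm : 1 ≤ m)
    (S : Finset (ℕ × τ))
    (hwin : ∀ c ∈ S, x₀ ≤ c.1 ∧ c.1 < x₀ + m)
    (hG : GoodCfg Danger S)
    (KL KN A B : ℕ)
    (HLOC : ∀ T : Finset (ℕ × τ), T ⊆ S → ∀ y₀ ℓ : ℕ, ℓ ≤ μ →
      (∀ c ∈ T, y₀ ≤ c.1 ∧ c.1 < y₀ + ℓ) →
      T.card ≤ KL * E * ℓ + KN * (T.image Prod.snd).card)
    (HDER : ∀ T : Finset (ℕ × τ), GoodCfg Danger T →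
      (∀ e ∈ T, e.1 < (m - 1) / μ + 1) →
      T.card ≤ A + B * (T.image Prod.snd).card) :
    ∃ NL NG : ℕ, NL + NG ≤ (S.image Prod.snd).card ∧
      S.card ≤ KL * E * m + 3 * E * m + A + KN * NL + (4 + B) * NG := by
  classical
  set p : ℕ := (m - 1) / μ + 1 with hp
  set q : ℕ → ℕ := fun x => (x - x₀) / μ with hqdef
  have hdiv : ∀ x : ℕ, μ * q x ≤ x - x₀ ∧ x - x₀ < μ * q x + μ := by
    intro x
    have h1 := Nat.div_add_mod (x - x₀) μ
    have h2 := Nat.mod_lt (x - x₀) (show 0 < μ by omega)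
    simp only [hqdef]
    omega
  have hqlt : ∀ c ∈ S, q c.1 < p := by
    intro c hc
    have h1 : c.1 - x₀ ≤ m - 1 := by have := hwin c hc; omega
    have h2 : (c.1 - x₀)/μ ≤ (m-1)/μ := Nat.div_le_div_right h1
    simp only [hqdef]
    omega
  have hpm : m ≤ p * μ := by
    have h1 := Nat.div_add_mod (m - 1) μ
    have h2 := Nat.mod_lt (m - 1) (show 0 < μ by omega)
    have h3 : p * μ = μ * ((m-1)/μ) + μ := by rw [hp]; ring
    omega
  set hasE : ℕ × τ → Prop := fun c => ∃ c' ∈ S, c'.2 = c.2 ∧ q c'.1 < q c.1 with hhasE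
  set hasL : ℕ × τ → Prop := fun c => ∃ c' ∈ S, c'.2 = c.2 ∧ q c.1 < q c'.1 with hhasL
  set Si : ℕ → Finset (ℕ × τ) := fun i => S.filter (fun c => q c.1 = i) with hSi
  set SiL : ℕ → Finset (ℕ × τ) :=
    fun i => ((Si i).filter (fun c => ¬ hasE c)).filter (fun c => ¬ hasL c) with hSiL
  set SiF : ℕ → Finset (ℕ × τ) :=
    fun i => ((Si i).filter (fun c => ¬ hasE c)).filter (fun c => hasL c) with hSiF
  set SiE : ℕ → Finset (ℕ × τ) :=
    fun i => ((Si i).filter (fun c => hasE c)).filter (fun c => ¬ hasL c) with hSiE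
  set SiM : ℕ → Finset (ℕ × τ) :=
    fun i => ((Si i).filter (fun c => hasE c)).filter (fun c => hasL c) with hSiM
  have hmemSi : ∀ i c, c ∈ Si i ↔ c ∈ S ∧ q c.1 = i := by
    intro i c; simp [hSi]
  have hmemSiL : ∀ i c, c ∈ SiL i ↔ (c ∈ S ∧ q c.1 = i) ∧ ¬ hasE c ∧ ¬ hasL c := by
    intro i c; simp [hSiL, hSi, and_assoc]
  have hmemSiF : ∀ i c, c ∈ SiF i ↔ (c ∈ S ∧ q c.1 = i) ∧ ¬ hasE c ∧ hasL c := by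
    intro i c; simp [hSiF, hSi, and_assoc]
  have hmemSiE : ∀ i c, c ∈ SiE i ↔ (c ∈ S ∧ q c.1 = i) ∧ hasE c ∧ ¬ hasL c := by
    intro i c; simp [hSiE, hSi, and_assoc]
  have hmemSiM : ∀ i c, c ∈ SiM i ↔ (c ∈ S ∧ q c.1 = i) ∧ hasE c ∧ hasL c := by
    intro i c; simp [hSiM, hSi, and_assoc]
  set ℓ : ℕ → ℕ := fun i => min ((i+1)*μ) m - min (i*μ) m with hℓ
  have hℓμ : ∀ i, ℓ i ≤ μ := by
    intro i
    have h : (i+1)*μ = i*μ + μ := by ring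
    simp only [hℓ]; omega
  have hsumℓ : ∑ i ∈ Finset.range p, ℓ i = m := by
    have hmono : ∀ i, min (i*μ) m ≤ min ((i+1)*μ) m := by
      intro i
      have h : (i+1)*μ = i*μ + μ := by ring
      omega
    have ht := tele_sum (fun i => min (i*μ) m) hmono p
    simp only [hℓ]
    rw [ht]
    have h0 : (0:ℕ)*μ = 0 := by ring
    omega
  -- windows
  have hwini : ∀ i, ∀ c ∈ Si i, x₀ + i*μ ≤ c.1 ∧ c.1 < (x₀ + i*μ) + ℓ i := by
    intro i c hc
    obtain ⟨hcS, hqi⟩ := (hmemSi i c).mp hc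
    have hw := hwin c hcS
    have hd := hdiv c.1
    rw [hqi] at hd
    have h1 : (i+1)*μ = i*μ + μ := by ring
    have h2 : μ * i = i * μ := by ring
    simp only [hℓ]
    omega
  -- key locality lemma
  have hqeq_local : ∀ c c' : ℕ × τ, c ∈ S → ¬ hasE c → ¬ hasL c → c' ∈ S →
      c'.2 = c.2 → q c'.1 = q c.1 := by
    intro c c' _ hne hnl hc' hrow
    rcases lt_trichotomy (q c'.1) (q c.1) with h | h | h
    · exact absurd ⟨c', hc', hrow, h⟩ hne
    · exact h
    · exact absurd ⟨c', hc', hrow, h⟩ hnl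
  -- fiberwise cell count
  have hfib : S.card = ∑ i ∈ Finset.range p, (Si i).card := by
    exact Finset.card_eq_sum_card_fiberwise
      (fun c hc => Finset.mem_range.mpr (hqlt c hc))
  have hsplit4 : ∀ i, (Si i).card
      = (SiL i).card + (SiF i).card + (SiE i).card + (SiM i).card := by
    intro i
    have e1 := Finset.card_filter_add_card_filter_not
      (s := Si i) (p := fun c => hasE c)
    have e2 := Finset.card_filter_add_card_filter_not
      (s := (Si i).filter (fun c => hasE c)) (p := fun c => hasL c)
    have e3 := Finset.card_filter_add_card_filter_not
      (s := (Si i).filter (fun c => ¬ hasE c)) (p := fun c => hasL c)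
    simp only [hSiL, hSiF, hSiE, hSiM]
    omega
  -- local part bound
  have hLb : ∀ i ∈ Finset.range p, (SiL i).card
      ≤ KL * E * (ℓ i) + KN * ((SiL i).image Prod.snd).card := by
    intro i _
    refine HLOC (SiL i) ?_ (x₀ + i*μ) (ℓ i) (hℓμ i) ?_
    · intro c hc
      exact ((hmemSiL i c).mp hc).1.1
    · intro c hc
      have h := (hmemSiL i c).mp hc
      exact hwini i c ((hmemSi i c).mpr h.1)
  -- F part: 3-window-free inside its part
  have hFfree : ∀ i, ∀ R : Finset τ, Danger R → ¬ Blk3 (SiF i) R := by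
    intro i R hDR hB3
    obtain ⟨c1, c2, h12, hR⟩ := hB3
    rcases R.eq_empty_or_nonempty with rfl | ⟨t₀, ht₀⟩
    · exact hG ∅ hDR ⟨0, 0, 0, le_refl 0, le_refl 0,
        fun t ht => absurd ht (Finset.notMem_empty t)⟩
    apply hG R hDR
    obtain ⟨_, _, ⟨x3, hx3, hx3gt⟩⟩ := hR t₀ ht₀
    have hx3m := (hmemSiF i _).mp hx3
    have hx3win := hwini i _ ((hmemSi i _).mpr hx3m.1)
    have hc2c3 : c2 ≤ x₀ + i*μ + (μ - 1) := by
      have := hℓμ i; omega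
    refine ⟨c1, c2, x₀ + i*μ + (μ - 1), h12, hc2c3, fun t ht => ?_⟩
    obtain ⟨⟨y1, hy1, hy1le⟩, ⟨y2, hy2, hy2a, hy2b⟩, ⟨y3, hy3, hy3a⟩⟩ := hR t ht
    have hy1m := (hmemSiF i _).mp hy1
    have hy2m := (hmemSiF i _).mp hy2
    have hy3m := (hmemSiF i _).mp hy3
    refine ⟨⟨y1, hy1m.1.1, hy1le⟩, ⟨y2, hy2m.1.1, hy2a, hy2b⟩,
      ⟨y3, hy3m.1.1, hy3a, ?_⟩, ?_⟩
    · have := hwini i _ ((hmemSi i _).mpr hy3m.1)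
      have := hℓμ i
      omega
    · -- fourth window from hasL
      obtain ⟨c', hc'S, hrow, hqgt⟩ := hy3m.2.2
      refine ⟨c'.1, ?_, ?_⟩
      · have h : c' = (c'.1, t) := Prod.ext rfl hrow
        rw [← h]; exact hc'S
      · have hd := hdiv c'.1
        have hw := hwin c' hc'S
        rw [hy3m.1.2] at hqgt
        have hmul : μ * (i+1) ≤ μ * q c'.1 := Nat.mul_le_mul_left μ (by omega)
        have h1 : μ * (i+1) = i*μ + μ := by ring
        omega
  have hFb : ∀ i ∈ Finset.range p, (SiF i).card
      ≤ E * (ℓ i) + 2 * ((SiF i).image Prod.snd).card := by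
    intro i _
    refine l3_bound HE (SiF i) (x₀ + i*μ) (ℓ i) ?_ (hFfree i)
    intro c hc
    exact hwini i c ((hmemSi i c).mpr ((hmemSiF i c).mp hc).1)
  -- E part
  have hEfree : ∀ i, ∀ R : Finset τ, Danger R → ¬ Blk3 (SiE i) R := by
    intro i R hDR hB3
    obtain ⟨c1, c2, h12, hR⟩ := hB3
    rcases R.eq_empty_or_nonempty with rfl | ⟨t₀, ht₀⟩
    · exact hG ∅ hDR ⟨0, 0, 0, le_refl 0, le_refl 0,
        fun t ht => absurd ht (Finset.notMem_empty t)⟩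
    apply hG R hDR
    obtain ⟨⟨x1, hx1, hx1le⟩, _, _⟩ := hR t₀ ht₀
    have hx1m := (hmemSiE i _).mp hx1
    have hx1win := hwini i _ ((hmemSi i _).mpr hx1m.1)
    have hcut1 : x₀ + i*μ - 1 ≤ c1 := by omega
    refine ⟨x₀ + i*μ - 1, c1, c2, hcut1, h12, fun t ht => ?_⟩
    obtain ⟨⟨y1, hy1, hy1le⟩, ⟨y2, hy2, hy2a, hy2b⟩, ⟨y3, hy3, hy3a⟩⟩ := hR t ht
    have hy1m := (hmemSiE i _).mp hy1
    have hy2m := (hmemSiE i _).mp hy2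
    have hy3m := (hmemSiE i _).mp hy3
    have hy1win := hwini i _ ((hmemSi i _).mpr hy1m.1)
    -- first window: an earlier cell from hasE
    obtain ⟨c', hc'S, hrow, hqlt'⟩ := hy1m.2.1
    have hi1 : 1 ≤ i := by
      rw [hy1m.1.2] at hqlt'; omega
    refine ⟨⟨c'.1, ?_, ?_⟩, ⟨y1, hy1m.1.1, ?_, hy1le⟩,
      ⟨y2, hy2m.1.1, hy2a, hy2b⟩, ⟨y3, hy3m.1.1, hy3a⟩⟩
    · have h : c' = (c'.1, t) := Prod.ext rfl hrow
      rw [← h]; exact hc'S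
    · have hd := hdiv c'.1
      rw [hy1m.1.2] at hqlt'
      have hmul : μ * (q c'.1 + 1) ≤ μ * i := Nat.mul_le_mul_left μ (by omega)
      have h1 : μ * i = i * μ := by ring
      have h2 : μ * (q c'.1 + 1) = μ * q c'.1 + μ := by ring
      have hw := hwin c' hc'S
      omega
    · have hmul : 1 * μ ≤ i * μ := Nat.mul_le_mul_right μ hi1
      omega
  have hEb : ∀ i ∈ Finset.range p, (SiE i).card
      ≤ E * (ℓ i) + 2 * ((SiE i).image Prod.snd).card := by
    intro i _
    refine l3_bound HE (SiE i) (x₀ + i*μ) (ℓ i) ?_ (hEfree i)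
    intro c hc
    exact hwini i c ((hmemSi i c).mpr ((hmemSiE i c).mp hc).1)
  -- M part
  have hMfree : ∀ i, ∀ R : Finset τ, Danger R → ¬ Blk2 (SiM i) R := by
    intro i R hDR hB2
    obtain ⟨c1, hR⟩ := hB2
    rcases R.eq_empty_or_nonempty with rfl | ⟨t₀, ht₀⟩
    · exact hG ∅ hDR ⟨0, 0, 0, le_refl 0, le_refl 0,
        fun t ht => absurd ht (Finset.notMem_empty t)⟩
    apply hG R hDR
    obtain ⟨⟨x1, hx1, hx1le⟩, ⟨x2, hx2, hx2gt⟩⟩ := hR t₀ ht₀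
    have hx1m := (hmemSiM i _).mp hx1
    have hx2m := (hmemSiM i _).mp hx2
    have hx1win := hwini i _ ((hmemSi i _).mpr hx1m.1)
    have hx2win := hwini i _ ((hmemSi i _).mpr hx2m.1)
    have hℓi := hℓμ i
    have hcut1 : x₀ + i*μ - 1 ≤ c1 := by omega
    have hcut2 : c1 ≤ x₀ + i*μ + (μ - 1) := by omega
    refine ⟨x₀ + i*μ - 1, c1, x₀ + i*μ + (μ - 1), hcut1, hcut2, fun t ht => ?_⟩
    obtain ⟨⟨y1, hy1, hy1le⟩, ⟨y2, hy2, hy2gt⟩⟩ := hR t ht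
    have hy1m := (hmemSiM i _).mp hy1
    have hy2m := (hmemSiM i _).mp hy2
    have hy1win := hwini i _ ((hmemSi i _).mpr hy1m.1)
    have hy2win := hwini i _ ((hmemSi i _).mpr hy2m.1)
    obtain ⟨cE, hcES, hrowE, hqE⟩ := hy1m.2.1
    obtain ⟨cL, hcLS, hrowL, hqL⟩ := hy2m.2.2
    have hi1 : 1 ≤ i := by rw [hy1m.1.2] at hqE; omega
    refine ⟨⟨cE.1, ?_, ?_⟩, ⟨y1, hy1m.1.1, ?_, hy1le⟩,
      ⟨y2, hy2m.1.1, hy2gt, ?_⟩, ⟨cL.1, ?_, ?_⟩⟩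
    · have h : cE = (cE.1, t) := Prod.ext rfl hrowE
      rw [← h]; exact hcES
    · have hd := hdiv cE.1
      rw [hy1m.1.2] at hqE
      have hmul : μ * (q cE.1 + 1) ≤ μ * i := Nat.mul_le_mul_left μ (by omega)
      have h1 : μ * i = i * μ := by ring
      have h2 : μ * (q cE.1 + 1) = μ * q cE.1 + μ := by ring
      have hw := hwin cE hcES
      omega
    · have hmul : 1 * μ ≤ i * μ := Nat.mul_le_mul_right μ hi1
      omega
    · omega
    · have h : cL = (cL.1, t) := Prod.ext rfl hrowL
      rw [← h]; exact hcLS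
    · have hd := hdiv cL.1
      rw [hy2m.1.2] at hqL
      have hmul : μ * (i+1) ≤ μ * q cL.1 := Nat.mul_le_mul_left μ (by omega)
      have h1 : μ * (i+1) = i*μ + μ := by ring
      have hw := hwin cL hcLS
      omega
  have hMb : ∀ i ∈ Finset.range p, (SiM i).card
      ≤ E * (ℓ i) + ((SiM i).image Prod.snd).card := by
    intro i _
    refine l2_bound HE (SiM i) (x₀ + i*μ) (ℓ i) ?_ (hMfree i)
    intro c hc
    exact hwini i c ((hmemSi i c).mpr ((hmemSiM i c).mp hc).1)
  -- row sets
  set NLs : Finset τ := (S.filter fun c => ¬ hasE c ∧ ¬ hasL c).image Prod.snd with hNLs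
  set NGs : Finset τ := (S.filter fun c => hasE c ∨ hasL c).image Prod.snd with hNGs
  have hSumL : ∑ i ∈ Finset.range p, ((SiL i).image Prod.snd).card ≤ NLs.card := by
    apply sum_card_le_of_disjoint
    · intro i _ t ht
      obtain ⟨c, hc, hct⟩ := Finset.mem_image.mp ht
      have h := (hmemSiL i c).mp hc
      exact Finset.mem_image.mpr ⟨c, Finset.mem_filter.mpr ⟨h.1.1, h.2⟩, hct⟩
    · intro i _ j _ hij
      rw [Finset.disjoint_left]
      intro t hti htj
      obtain ⟨c, hc, hct⟩ := Finset.mem_image.mp hti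
      obtain ⟨c', hc', hct'⟩ := Finset.mem_image.mp htj
      have h := (hmemSiL i c).mp hc
      have h' := (hmemSiL j c').mp hc'
      have := hqeq_local c c' h.1.1 h.2.1 h.2.2 h'.1.1 (by rw [hct', hct])
      rw [h.1.2, h'.1.2] at this
      exact hij this.symm
  have hSumF : ∑ i ∈ Finset.range p, ((SiF i).image Prod.snd).card ≤ NGs.card := by
    apply sum_card_le_of_disjoint
    · intro i _ t ht
      obtain ⟨c, hc, hct⟩ := Finset.mem_image.mp ht
      have h := (hmemSiF i c).mp hc
      exact Finset.mem_image.mpr ⟨c, Finset.mem_filter.mpr ⟨h.1.1, Or.inr h.2.2⟩, hct⟩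
    · intro i _ j _ hij
      rw [Finset.disjoint_left]
      intro t hti htj
      obtain ⟨c, hc, hct⟩ := Finset.mem_image.mp hti
      obtain ⟨c', hc', hct'⟩ := Finset.mem_image.mp htj
      have h := (hmemSiF i c).mp hc
      have h' := (hmemSiF j c').mp hc'
      have hrow : c'.2 = c.2 := by rw [hct', hct]
      rcases lt_trichotomy (q c'.1) (q c.1) with hlt | heq | hgt
      · exact h.2.1 ⟨c', h'.1.1, hrow, hlt⟩
      · rw [h.1.2, h'.1.2] at heq; exact hij heq.symm
      · exact h'.2.1 ⟨c, h.1.1, hrow.symm, hgt⟩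
  have hSumE : ∑ i ∈ Finset.range p, ((SiE i).image Prod.snd).card ≤ NGs.card := by
    apply sum_card_le_of_disjoint
    · intro i _ t ht
      obtain ⟨c, hc, hct⟩ := Finset.mem_image.mp ht
      have h := (hmemSiE i c).mp hc
      exact Finset.mem_image.mpr ⟨c, Finset.mem_filter.mpr ⟨h.1.1, Or.inl h.2.1⟩, hct⟩
    · intro i _ j _ hij
      rw [Finset.disjoint_left]
      intro t hti htj
      obtain ⟨c, hc, hct⟩ := Finset.mem_image.mp hti
      obtain ⟨c', hc', hct'⟩ := Finset.mem_image.mp htj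
      have h := (hmemSiE i c).mp hc
      have h' := (hmemSiE j c').mp hc'
      have hrow : c'.2 = c.2 := by rw [hct', hct]
      rcases lt_trichotomy (q c'.1) (q c.1) with hlt | heq | hgt
      · exact h'.2.2 ⟨c, h.1.1, hrow.symm, hlt⟩
      · rw [h.1.2, h'.1.2] at heq; exact hij heq.symm
      · exact h.2.2 ⟨c', h'.1.1, hrow, hgt⟩
  have hNLG : NLs.card + NGs.card ≤ (S.image Prod.snd).card := by
    have hdisj : Disjoint NLs NGs := by
      rw [Finset.disjoint_left]
      intro t ht1 ht2
      obtain ⟨c, hc, hct⟩ := Finset.mem_image.mp ht1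
      obtain ⟨c', hc', hct'⟩ := Finset.mem_image.mp ht2
      have h := Finset.mem_filter.mp hc
      have h' := Finset.mem_filter.mp hc'
      have hrow : c'.2 = c.2 := by rw [hct', hct]
      have hqq := hqeq_local c c' h.1 h.2.1 h.2.2 h'.1 hrow
      rcases h'.2 with hE' | hL'
      · obtain ⟨c'', hc''S, hrow'', hlt''⟩ := hE'
        exact h.2.1 ⟨c'', hc''S, by rw [hrow'']; exact hrow, by omega⟩
      · obtain ⟨c'', hc''S, hrow'', hlt''⟩ := hL'
        exact h.2.2 ⟨c'', hc''S, by rw [hrow'']; exact hrow, by omega⟩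
    calc NLs.card + NGs.card = (NLs ∪ NGs).card := (Finset.card_union_of_disjoint hdisj).symm
      _ ≤ (S.image Prod.snd).card := by
          apply Finset.card_le_card
          apply Finset.union_subset
          · exact Finset.image_subset_image (Finset.filter_subset _ _)
          · exact Finset.image_subset_image (Finset.filter_subset _ _)
  -- derived configuration
  set S' : Finset (ℕ × τ) :=
    (S.filter fun c => hasE c ∧ hasL c).image (fun c => (q c.1, c.2)) with hS'def
  have hS'pos : ∀ e ∈ S', e.1 < p := by
    intro e he
    obtain ⟨c, hc, hce⟩ := Finset.mem_image.mp he
    have := hqlt c (Finset.mem_filter.mp hc).1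
    rw [← hce]
    exact this
  have hS'good : GoodCfg Danger S' := by
    intro R hDR hB4
    obtain ⟨d1, d2, d3, h12, h23, hR⟩ := hB4
    apply hG R hDR
    have hm12 : d1*μ ≤ d2*μ := Nat.mul_le_mul_right μ h12
    have hm23 : d2*μ ≤ d3*μ := Nat.mul_le_mul_right μ h23
    refine ⟨x₀ + d1*μ + (μ-1), x₀ + d2*μ + (μ-1), x₀ + d3*μ + (μ-1),
      by omega, by omega, fun t ht => ?_⟩
    obtain ⟨⟨i1, he1, hi1⟩, ⟨i2, he2, hi2a, hi2b⟩, ⟨i3, he3, hi3a, hi3b⟩,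
      ⟨i4, he4, hi4⟩⟩ := hR t ht
    have hext : ∀ i' : ℕ, (i', t) ∈ S' →
        ∃ c : ℕ × τ, c ∈ S ∧ q c.1 = i' ∧ c.2 = t := by
      intro i' hi'
      obtain ⟨c, hc, hce⟩ := Finset.mem_image.mp hi'
      exact ⟨c, (Finset.mem_filter.mp hc).1,
        congrArg Prod.fst hce, congrArg Prod.snd hce⟩
    obtain ⟨c1, hc1S, hq1, hr1⟩ := hext i1 he1
    obtain ⟨c2, hc2S, hq2, hr2⟩ := hext i2 he2
    obtain ⟨c3, hc3S, hq3, hr3⟩ := hext i3 he3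
    obtain ⟨c4, hc4S, hq4, hr4⟩ := hext i4 he4
    have key_le : ∀ (c : ℕ × τ) (d : ℕ), c ∈ S → q c.1 ≤ d → c.1 ≤ x₀ + d*μ + (μ-1) := by
      intro c d hcS hqd
      have hd := hdiv c.1
      have hmul : μ * q c.1 ≤ μ * d := Nat.mul_le_mul_left μ hqd
      have h1 : μ * d = d * μ := by ring
      have hw := hwin c hcS
      omega
    have key_gt : ∀ (c : ℕ × τ) (d : ℕ), c ∈ S → d < q c.1 → x₀ + d*μ + (μ-1) < c.1 := by
      intro c d hcS hqd
      have hd := hdiv c.1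
      have hmul : μ * (d+1) ≤ μ * q c.1 := Nat.mul_le_mul_left μ (by omega)
      have h1 : μ * (d+1) = d * μ + μ := by ring
      have hw := hwin c hcS
      omega
    refine ⟨⟨c1.1, ?_, key_le c1 d1 hc1S (by omega)⟩,
      ⟨c2.1, ?_, key_gt c2 d1 hc2S (by omega), key_le c2 d2 hc2S (by omega)⟩,
      ⟨c3.1, ?_, key_gt c3 d2 hc3S (by omega), key_le c3 d3 hc3S (by omega)⟩,
      ⟨c4.1, ?_, key_gt c4 d3 hc4S (by omega)⟩⟩
    · have h : c1 = (c1.1, t) := Prod.ext rfl hr1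
      rw [← h]; exact hc1S
    · have h : c2 = (c2.1, t) := Prod.ext rfl hr2
      rw [← h]; exact hc2S
    · have h : c3 = (c3.1, t) := Prod.ext rfl hr3
      rw [← h]; exact hc3S
    · have h : c4 = (c4.1, t) := Prod.ext rfl hr4
      rw [← h]; exact hc4S
  have hder : S'.card ≤ A + B * (S'.image Prod.snd).card := HDER S' hS'good hS'pos
  have hS'rows : (S'.image Prod.snd) ⊆ NGs := by
    intro t ht
    obtain ⟨e, he, het⟩ := Finset.mem_image.mp ht
    obtain ⟨c, hc, hce⟩ := Finset.mem_image.mp he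
    have h := Finset.mem_filter.mp hc
    refine Finset.mem_image.mpr ⟨c, Finset.mem_filter.mpr ⟨h.1, Or.inl h.2.1⟩, ?_⟩
    have h2 : c.2 = e.2 := by rw [← hce]
    rw [h2, het]
  have hSumM : ∑ i ∈ Finset.range p, ((SiM i).image Prod.snd).card = S'.card := by
    rw [Finset.card_eq_sum_card_fiberwise
      (f := Prod.fst) (t := Finset.range p) (fun e he => Finset.mem_range.mpr (hS'pos e he))]
    apply Finset.sum_congr rfl
    intro i _
    have hset : S'.filter (fun e => e.1 = i)
        = ((SiM i).image Prod.snd).image (fun t => (i, t)) := by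
      ext e
      constructor
      · intro he
        obtain ⟨he', hei⟩ := Finset.mem_filter.mp he
        obtain ⟨c, hc, hce⟩ := Finset.mem_image.mp he'
        have h := Finset.mem_filter.mp hc
        have hq1 : q c.1 = e.1 := by rw [← hce]
        have hq2 : c.2 = e.2 := by rw [← hce]
        refine Finset.mem_image.mpr ⟨c.2, ?_, ?_⟩
        · refine Finset.mem_image.mpr ⟨c, ?_, rfl⟩
          refine (hmemSiM i c).mpr ⟨⟨h.1, ?_⟩, h.2⟩
          rw [hq1, hei]
        · rw [hq2, ← hei]
      · intro he
        obtain ⟨t, ht, hte⟩ := Finset.mem_image.mp he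
        obtain ⟨c, hc, hct⟩ := Finset.mem_image.mp ht
        have h := (hmemSiM i c).mp hc
        refine Finset.mem_filter.mpr ⟨?_, ?_⟩
        · refine Finset.mem_image.mpr ⟨c, Finset.mem_filter.mpr ⟨h.1.1, h.2⟩, ?_⟩
          rw [← hte, hct, h.1.2]
        · rw [← hte]
    have hcardeq : (((SiM i).image Prod.snd).image (fun t => (i, t))).card
        = ((SiM i).image Prod.snd).card := by
      apply Finset.card_image_of_injective
      intro a b hab
      exact congrArg Prod.snd hab
    rw [hset]
    exact hcardeq.symm
  -- final assembly
  refine ⟨NLs.card, NGs.card, hNLG, ?_⟩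
  have hsum1 : ∑ i ∈ Finset.range p, (SiL i).card ≤ KL*E*m + KN * NLs.card := by
    calc ∑ i ∈ Finset.range p, (SiL i).card
        ≤ ∑ i ∈ Finset.range p, (KL*E*(ℓ i) + KN * ((SiL i).image Prod.snd).card) :=
          Finset.sum_le_sum hLb
      _ = KL*E*(∑ i ∈ Finset.range p, ℓ i)
          + KN * (∑ i ∈ Finset.range p, ((SiL i).image Prod.snd).card) := by
          rw [Finset.sum_add_distrib, Finset.mul_sum, Finset.mul_sum]
      _ ≤ KL*E*m + KN * NLs.card := by
          rw [hsumℓ]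
          exact Nat.add_le_add_left (Nat.mul_le_mul_left _ hSumL) _
  have hsum2 : ∑ i ∈ Finset.range p, (SiF i).card ≤ E*m + 2 * NGs.card := by
    calc ∑ i ∈ Finset.range p, (SiF i).card
        ≤ ∑ i ∈ Finset.range p, (E*(ℓ i) + 2 * ((SiF i).image Prod.snd).card) :=
          Finset.sum_le_sum hFb
      _ = E*(∑ i ∈ Finset.range p, ℓ i)
          + 2 * (∑ i ∈ Finset.range p, ((SiF i).image Prod.snd).card) := by
          rw [Finset.sum_add_distrib, Finset.mul_sum, Finset.mul_sum]
      _ ≤ E*m + 2 * NGs.card := by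
          rw [hsumℓ]
          exact Nat.add_le_add_left (Nat.mul_le_mul_left _ hSumF) _
  have hsum3 : ∑ i ∈ Finset.range p, (SiE i).card ≤ E*m + 2 * NGs.card := by
    calc ∑ i ∈ Finset.range p, (SiE i).card
        ≤ ∑ i ∈ Finset.range p, (E*(ℓ i) + 2 * ((SiE i).image Prod.snd).card) :=
          Finset.sum_le_sum hEb
      _ = E*(∑ i ∈ Finset.range p, ℓ i)
          + 2 * (∑ i ∈ Finset.range p, ((SiE i).image Prod.snd).card) := by
          rw [Finset.sum_add_distrib, Finset.mul_sum, Finset.mul_sum]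
      _ ≤ E*m + 2 * NGs.card := by
          rw [hsumℓ]
          exact Nat.add_le_add_left (Nat.mul_le_mul_left _ hSumE) _
  have hS'NG : S'.card ≤ A + B * NGs.card := by
    calc S'.card ≤ A + B * (S'.image Prod.snd).card := hder
      _ ≤ A + B * NGs.card :=
          Nat.add_le_add_left (Nat.mul_le_mul_left _ (Finset.card_le_card hS'rows)) _
  have hsum4 : ∑ i ∈ Finset.range p, (SiM i).card ≤ E*m + A + B * NGs.card := by
    calc ∑ i ∈ Finset.range p, (SiM i).card
        ≤ ∑ i ∈ Finset.range p, (E*(ℓ i) + ((SiM i).image Prod.snd).card) :=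
          Finset.sum_le_sum hMb
      _ = E*(∑ i ∈ Finset.range p, ℓ i)
          + (∑ i ∈ Finset.range p, ((SiM i).image Prod.snd).card) := by
          rw [Finset.sum_add_distrib, Finset.mul_sum]
      _ = E*m + S'.card := by rw [hsumℓ, hSumM]
      _ ≤ E*m + (A + B * NGs.card) := Nat.add_le_add_left hS'NG _
      _ = E*m + A + B * NGs.card := by ring
  have htot : ∑ i ∈ Finset.range p, (Si i).card
      = (∑ i ∈ Finset.range p, (SiL i).card) + (∑ i ∈ Finset.range p, (SiF i).card)
        + (∑ i ∈ Finset.range p, (SiE i).card) + (∑ i ∈ Finset.range p, (SiM i).card) := by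
    rw [← Finset.sum_add_distrib, ← Finset.sum_add_distrib, ← Finset.sum_add_distrib]
    exact Finset.sum_congr rfl (fun i _ => hsplit4 i)
  rw [hfib, htot]
  have hE3 : 3 * E * m = E*m + E*m + E*m := by ring
  have h4B : (4+B) * NGs.card = 2*NGs.card + 2*NGs.card + B*NGs.card := by ring
  omega

end Rec

/-! ### the hierarchy -/

def hf : ℕ → ℕ → ℕ
  | 0, _ => 1
  | 1, t => 2 ^ t
  | j+2, 0 => 1
  | j+2, t+1 => hf (j+2) t * hf (j+1) (hf (j+2) t)
termination_by j t => (j, t)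

lemma hf_succ (k t : ℕ) : hf (k+2) (t+1) = hf (k+2) t * hf (k+1) (hf (k+2) t) := by
  rw [hf]

lemma hf_pos : ∀ j t, 1 ≤ hf j t := by
  intro j
  induction j using Nat.strong_induction_on with
  | _ j ih =>
    match j with
    | 0 => intro t; simp [hf]
    | 1 => intro t; simp only [hf]; exact Nat.one_le_two_pow
    | k+2 =>
      intro t
      induction t with
      | zero => simp [hf]
      | succ t iht =>
        rw [hf_succ]
        calc 1 = 1 * 1 := by ring
          _ ≤ _ := Nat.mul_le_mul iht (ih (k+1) (by omega) _)

lemma hf_le_succ (j t : ℕ) : hf j t ≤ hf j (t+1) := by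
  match j with
  | 0 => simp [hf]
  | 1 => simp only [hf]; exact Nat.pow_le_pow_right (by omega) (by omega)
  | k+2 =>
    rw [hf_succ]
    calc hf (k+2) t = hf (k+2) t * 1 := by ring
      _ ≤ _ := Nat.mul_le_mul_left _ (hf_pos _ _)

lemma hf_mono_t (j : ℕ) : Monotone (hf j) :=
  monotone_nat_of_le_succ (hf_le_succ j)

lemma hf_ge_two_pow : ∀ j t, 1 ≤ j → 2 ^ t ≤ hf j t := by
  intro j
  induction j using Nat.strong_induction_on with
  | _ j ih =>
    match j with
    | 0 => intro t h; omega
    | 1 => intro t _; simp [hf]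
    | k+2 =>
      intro t _
      induction t with
      | zero => simp [hf]
      | succ t iht =>
        rw [hf_succ, pow_succ]
        apply Nat.mul_le_mul iht
        calc 2 = 2^1 := rfl
          _ ≤ 2 ^ (hf (k+2) t) := Nat.pow_le_pow_right (by omega) (hf_pos _ _)
          _ ≤ hf (k+1) (hf (k+2) t) := ih (k+1) (by omega) _ (by omega)

lemma hf_one : ∀ j, 1 ≤ j → hf j 1 = 2 := by
  intro j
  induction j using Nat.strong_induction_on with
  | _ j ih =>
    match j with
    | 0 => intro h; omega
    | 1 => intro _; simp [hf]
    | k+2 =>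
      intro _
      rw [hf_succ]
      have h0 : hf (k+2) 0 = 1 := by simp [hf]
      rw [h0, ih (k+1) (by omega) (by omega)]

lemma two_pow_ge_add_two : ∀ u, 2 ≤ u → u + 2 ≤ 2 ^ u := by
  intro u hu
  induction u with
  | zero => omega
  | succ u ih =>
    rcases Nat.lt_or_ge u 2 with h | h
    · interval_cases u <;> simp <;> omega
    · have := ih h
      have : 2^(u+1) = 2^u * 2 := by ring
      omega

lemma hf_level_up (j s : ℕ) (hj : 1 ≤ j) (hs : 3 ≤ s) :
    hf j (s+1) ≤ hf (j+1) s := by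
  obtain ⟨u, rfl⟩ : ∃ u, s = u + 1 := ⟨s - 1, by omega⟩
  obtain ⟨k, rfl⟩ : ∃ k, j = k + 1 := ⟨j - 1, by omega⟩
  rw [hf_succ]
  have h1 : 2 ^ u ≤ hf (k+2) u := hf_ge_two_pow _ _ (by omega)
  have h2 : u + 2 ≤ 2 ^ u := two_pow_ge_add_two u (by omega)
  calc hf (k+1) (u+1+1) ≤ hf (k+1) (hf (k+2) u) := hf_mono_t _ (by omega)
    _ = 1 * hf (k+1) (hf (k+2) u) := by ring
    _ ≤ _ := Nat.mul_le_mul_right _ (hf_pos _ _)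

lemma hf_diag : ∀ k j, 1 ≤ j → hf j (k+3) ≤ hf (j+k) 3 := by
  intro k
  induction k with
  | zero => intro j hj; simp
  | succ k ih =>
    intro j hj
    calc hf j (k+4) = hf j ((k+3)+1) := by norm_num
      _ ≤ hf (j+1) (k+3) := hf_level_up j (k+3) hj (by omega)
      _ ≤ hf (j+1+k) 3 := ih (j+1) (by omega)
      _ = hf (j+(k+1)) 3 := by ring_nf

lemma ack_le_hf : ∀ k t, ack k t + 3 ≤ hf (k+2) (t+3) := by
  intro k
  induction k with
  | zero =>
    intro t
    rw [ack_zero]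
    norm_num
    have h1 : 2 ^ (t+3) ≤ hf 2 (t+3) := hf_ge_two_pow _ _ (by omega)
    have h2 : (t+3) + 2 ≤ 2 ^ (t+3) := two_pow_ge_add_two _ (by omega)
    omega
  | succ k ihk =>
    intro t
    induction t with
    | zero =>
      rw [ack_succ_zero]
      calc ack k 1 + 3 ≤ hf (k+2) 4 := ihk 1
        _ ≤ hf (k+3) 3 := hf_level_up (k+2) 3 (by omega) (by omega)
    | succ t iht =>
      rw [ack_succ_succ]
      have hb1 : ack k (ack (k+1) t) + 3 ≤ hf (k+2) (ack (k+1) t + 3) := ihk _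
      have hb2 : hf (k+2) (ack (k+1) t + 3) ≤ hf (k+2) (hf (k+3) (t+3)) :=
        hf_mono_t _ iht
      have hb3 : hf ((k+1)+2) ((t+3)+1) = hf (k+3) (t+3) * hf (k+2) (hf (k+3) (t+3)) :=
        hf_succ (k+1) (t+3)
      have hb4 : hf (k+2) (hf (k+3) (t+3)) ≤ hf ((k+1)+2) ((t+3)+1) := by
        rw [hb3]
        calc hf (k+2) (hf (k+3) (t+3)) = 1 * hf (k+2) (hf (k+3) (t+3)) := by ring
          _ ≤ _ := Nat.mul_le_mul_right _ (hf_pos _ _)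
      have hb5 : hf ((k+1)+2) ((t+3)+1) = hf (k+1+2) (t+1+3) := by norm_num
      omega

lemma pceil_le {m μ K : ℕ} (hμ : 1 ≤ μ) (hm : 1 ≤ m) (h : m ≤ K * μ) :
    (m-1)/μ + 1 ≤ K := by
  have h1 : (m-1)/μ < K := by
    rw [Nat.div_lt_iff_lt_mul (by omega)]
    omega
  omega

theorem core_bound {τ : Type*} [DecidableEq τ] {Danger : Finset τ → Prop} {E : ℕ}
    (HE : ∀ W : Finset τ, (∀ R ⊆ W, ¬ Danger R) → W.card ≤ E) :
    ∀ j, 1 ≤ j → ∀ t, 1 ≤ t → ∀ m x₀ (S : Finset (ℕ × τ)),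
      m ≤ hf j t → (∀ c ∈ S, x₀ ≤ c.1 ∧ c.1 < x₀ + m) → GoodCfg Danger S →
      S.card ≤ 12*j*t*E*m + 6*j*(S.image Prod.snd).card := by
  intro j hj
  induction j, hj using Nat.le_induction with
  | base =>
    intro t ht
    induction t, ht using Nat.le_induction with
    | base =>
      intro m x₀ S hm hwin hG
      rw [hf_one 1 le_rfl] at hm
      have h1 := triv_bound S x₀ m hwin
      have h2 : m * (S.image Prod.snd).card ≤ 2 * (S.image Prod.snd).card :=
        Nat.mul_le_mul_right _ hm
      omega
    | succ t ht iht =>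
      intro m x₀ S hm hwin hG
      by_cases hc : m ≤ hf 1 t
      · refine le_trans (iht m x₀ S hc hwin hG) ?_
        have h1 : 12*1*t*E*m ≤ 12*1*(t+1)*E*m := by
          have e : 12*1*(t+1)*E*m = 12*1*t*E*m + 12*(E*m) := by ring
          omega
        omega
      · push_neg at hc
        have hμ1 : 1 ≤ hf 1 t := hf_pos 1 t
        have hm1 : 1 ≤ m := by omega
        have hm2 : m ≤ 2 * hf 1 t := by
          have ha : hf 1 (t+1) = 2^(t+1) := by simp [hf]
          have hb : hf 1 t = 2^t := by simp [hf]
          have hc' : (2:ℕ)^(t+1) = 2*2^t := by ring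
          omega
        have hp2 : (m-1)/(hf 1 t) + 1 ≤ 2 := pceil_le hμ1 hm1 hm2
        obtain ⟨NL, NG, hNLG, hbound⟩ :=
          rec_bound HE (hf 1 t) m x₀ hμ1 hm1 S hwin hG (12*1*t) (6*1) 0
            ((m-1)/(hf 1 t) + 1)
            (fun T hTS y₀ ℓ hℓμ hTwin => iht ℓ y₀ T hℓμ hTwin (hG.mono hTS))
            (fun T hTG hTpos => by
              have h := triv_bound T 0 ((m-1)/(hf 1 t) + 1)
                (fun c hc => ⟨Nat.zero_le _, by have := hTpos c hc; omega⟩)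
              omega)
        have hg1 : (4 + ((m-1)/(hf 1 t)+1))*NG ≤ 6*NG :=
          Nat.mul_le_mul_right _ (by omega)
        have hr1 : 12*1*(t+1)*E*m = 12*1*t*E*m + 12*(E*m) := by ring
        have hr2 : 3*E*m = 3*(E*m) := by ring
        omega
  | succ j hj ihj =>
    obtain ⟨k, rfl⟩ : ∃ k, j = k + 1 := ⟨j - 1, by omega⟩
    intro t ht
    induction t, ht using Nat.le_induction with
    | base =>
      intro m x₀ S hm hwin hG
      rw [hf_one (k+1+1) (by omega)] at hm
      have h1 := triv_bound S x₀ m hwin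
      have h2 : m * (S.image Prod.snd).card ≤ 2 * (S.image Prod.snd).card :=
        Nat.mul_le_mul_right _ hm
      have h3 : 2 * (S.image Prod.snd).card ≤ 6*(k+1+1)*(S.image Prod.snd).card :=
        Nat.mul_le_mul_right _ (by omega)
      omega
    | succ t ht iht =>
      intro m x₀ S hm hwin hG
      by_cases hc : m ≤ hf (k+1+1) t
      · refine le_trans (iht m x₀ S hc hwin hG) ?_
        have h1 : 12*(k+1+1)*t*E*m ≤ 12*(k+1+1)*(t+1)*E*m := by
          have e : 12*(k+1+1)*(t+1)*E*m = 12*(k+1+1)*t*E*m + 12*(k+1+1)*(E*m) := by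
            ring
          omega
        omega
      · push_neg at hc
        have hμ1 : 1 ≤ hf (k+2) t := hf_pos _ t
        have hm1 : 1 ≤ m := by
          have : hf (k+1+1) t = hf (k+2) t := rfl
          omega
        have hmle : m ≤ hf (k+2) t * hf (k+1) (hf (k+2) t) := by
          have := hf_succ k t
          have h : hf (k+1+1) (t+1) = hf (k+2) (t+1) := rfl
          omega
        by_cases hc2 : m ≤ 2*(k+1)*(hf (k+2) t)
        · -- few parts: derived bounded trivially
          have hp2 : (m-1)/(hf (k+2) t) + 1 ≤ 2*(k+1) :=
            pceil_le hμ1 hm1 hc2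
          obtain ⟨NL, NG, hNLG, hbound⟩ :=
            rec_bound HE (hf (k+2) t) m x₀ hμ1 hm1 S hwin hG
              (12*(k+1+1)*t) (6*(k+1+1)) 0 ((m-1)/(hf (k+2) t) + 1)
              (fun T hTS y₀ ℓ hℓμ hTwin => iht ℓ y₀ T hℓμ hTwin (hG.mono hTS))
              (fun T hTG hTpos => by
                have h := triv_bound T 0 ((m-1)/(hf (k+2) t) + 1)
                  (fun c hc => ⟨Nat.zero_le _, by have := hTpos c hc; omega⟩)
                omega)
          have hg1 : (4 + ((m-1)/(hf (k+2) t)+1))*NG ≤ 6*(k+1+1)*NG :=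
            Nat.mul_le_mul_right _ (by omega)
          have hg2 : 6*(k+1+1)*(NL+NG) ≤ 6*(k+1+1)*(S.image Prod.snd).card :=
            Nat.mul_le_mul_left _ hNLG
          have he2 : 6*(k+1+1)*(NL+NG) = 6*(k+1+1)*NL + 6*(k+1+1)*NG := by ring
          have hr1 : 12*(k+1+1)*(t+1)*E*m
              = 12*(k+1+1)*t*E*m + 12*(k+1+1)*(E*m) := by ring
          have hr2 : 3*E*m = 3*(E*m) := by ring
          have hr3 : 3*(E*m) ≤ 12*(k+1+1)*(E*m) := Nat.mul_le_mul_right _ (by omega)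
          omega
        · -- many parts: recurse on the derived configuration
          push_neg at hc2
          have hple : (m-1)/(hf (k+2) t) + 1 ≤ hf (k+1) (hf (k+2) t) := by
            refine pceil_le hμ1 hm1 ?_
            calc m ≤ hf (k+2) t * hf (k+1) (hf (k+2) t) := hmle
              _ = hf (k+1) (hf (k+2) t) * hf (k+2) t := by ring
          obtain ⟨NL, NG, hNLG, hbound⟩ :=
            rec_bound HE (hf (k+2) t) m x₀ hμ1 hm1 S hwin hG
              (12*(k+1+1)*t) (6*(k+1+1))
              (12*(k+1)*(hf (k+2) t)*E*((m-1)/(hf (k+2) t) + 1)) (6*(k+1))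
              (fun T hTS y₀ ℓ hℓμ hTwin => iht ℓ y₀ T hℓμ hTwin (hG.mono hTS))
              (fun T hTG hTpos =>
                ihj (hf (k+2) t) hμ1 ((m-1)/(hf (k+2) t) + 1) 0 T hple
                  (fun c hc => ⟨Nat.zero_le _, by have := hTpos c hc; omega⟩) hTG)
          -- bound the derived-cost term A
          have hμp : (hf (k+2) t) * ((m-1)/(hf (k+2) t) + 1) ≤ m + hf (k+2) t := by
            have hd : ((m-1)/(hf (k+2) t)) * (hf (k+2) t) ≤ m - 1 :=
              Nat.div_mul_le_self _ _
            have e : (hf (k+2) t) * ((m-1)/(hf (k+2) t) + 1)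
                = ((m-1)/(hf (k+2) t)) * (hf (k+2) t) + hf (k+2) t := by ring
            omega
          have hjm : 2*((k+1)*(hf (k+2) t)) ≤ m := by
            have e : 2*(k+1)*(hf (k+2) t) = 2*((k+1)*(hf (k+2) t)) := by ring
            omega
          have hA : 12*(k+1)*(hf (k+2) t)*E*((m-1)/(hf (k+2) t) + 1)
              ≤ 12*(k+1)*E*m + 6*(E*m) := by
            have e1 : 12*(k+1)*(hf (k+2) t)*E*((m-1)/(hf (k+2) t) + 1)
                = 12*E*((k+1)*((hf (k+2) t) * ((m-1)/(hf (k+2) t) + 1))) := by ring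
            have e2 : 12*E*((k+1)*((hf (k+2) t) * ((m-1)/(hf (k+2) t) + 1)))
                ≤ 12*E*((k+1)*(m + hf (k+2) t)) :=
              Nat.mul_le_mul_left _ (Nat.mul_le_mul_left _ hμp)
            have e3 : 12*E*((k+1)*(m + hf (k+2) t))
                = 12*(k+1)*E*m + 6*E*(2*((k+1)*(hf (k+2) t))) := by ring
            have e4 : 6*E*(2*((k+1)*(hf (k+2) t))) ≤ 6*E*m :=
              Nat.mul_le_mul_left _ hjm
            have e5 : 6*E*m = 6*(E*m) := by ring
            omega
          have hg1 : (4 + 6*(k+1))*NG ≤ 6*(k+1+1)*NG :=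
            Nat.mul_le_mul_right _ (by omega)
          have hg2 : 6*(k+1+1)*(NL+NG) ≤ 6*(k+1+1)*(S.image Prod.snd).card :=
            Nat.mul_le_mul_left _ hNLG
          have he2 : 6*(k+1+1)*(NL+NG) = 6*(k+1+1)*NL + 6*(k+1+1)*NG := by ring
          have hr1 : 12*(k+1+1)*(t+1)*E*m
              = 12*(k+1+1)*t*E*m + 12*(k+1)*E*m + 12*(E*m) := by ring
          have hr2 : 3*E*m = 3*(E*m) := by ring
          omega

/-! ### instantiation to multidimensional 0-1 matrices -/

section Inst

variable {d : ℕ} {pdims : Fin d → ℕ} {n : ℕ}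

/-- `R` is a rigid copy of `P` (the set of tails of a potential formation). -/
def DangerP (P : Finset ((i : Fin d) → Fin (pdims i))) (n : ℕ)
    (R : Finset (Fin d → Fin n)) : Prop :=
  ∃ g : (i : Fin d) → (Fin (pdims i) → Fin n), (∀ i, StrictMono (g i)) ∧
    R = P.image (fun x => fun i => g i (x i))

lemma gmap_inj (g : (i : Fin d) → (Fin (pdims i) → Fin n))
    (hg : ∀ i, StrictMono (g i)) :
    Function.Injective (fun (x : (i : Fin d) → Fin (pdims i)) => fun i => g i (x i)) := by
  intro x y h
  funext i
  exact (hg i).injective (congrFun h i)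

lemma HE_P (P : Finset ((i : Fin d) → Fin (pdims i))) :
    ∀ W : Finset (Fin d → Fin n), (∀ R ⊆ W, ¬ DangerP P n R) → W.card ≤ exSq n P := by
  intro W h
  apply le_csSup
  · refine ⟨Fintype.card (Fin d → Fin n), ?_⟩
    rintro k ⟨M, _, rfl⟩
    exact le_trans (Finset.card_le_univ M) (le_of_eq Finset.card_univ)
  · refine ⟨W, ?_, rfl⟩
    rintro ⟨f, hf, hmem⟩
    refine h (P.image (fun x => fun i => f i (x i))) ?_ ⟨f, hf, rfl⟩
    intro r hr
    obtain ⟨x, hx, rfl⟩ := Finset.mem_image.mp hr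
    exact hmem x hx

lemma good_of_formation_free (P : Finset ((i : Fin d) → Fin (pdims i)))
    (M : Finset (Fin (d+1) → Fin n)) (hM : ¬ ContainsFormation P 4 M) :
    GoodCfg (DangerP P n) (M.image (fun v => ((v 0 : ℕ), Fin.tail v))) := by
  classical
  intro R hDR hB4
  apply hM
  obtain ⟨g, hg, hRim⟩ := hDR
  obtain ⟨c1, c2, c3, h12, h23, hB⟩ := hB4
  have hS : ∀ (y : ℕ) (t : Fin d → Fin n),
      (y, t) ∈ M.image (fun v => ((v 0 : ℕ), Fin.tail v)) →
      ∃ v ∈ M, (v 0 : ℕ) = y ∧ Fin.tail v = t := by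
    intro y t hyt
    obtain ⟨v, hv, he⟩ := Finset.mem_image.mp hyt
    exact ⟨v, hv, congrArg Prod.fst he, congrArg Prod.snd he⟩
  set lo : Fin 4 → ℕ := ![0, c1+1, c2+1, c3+1] with hlo
  set hi : Fin 4 → ℕ := ![c1, c2, c3, n] with hhi
  have hchain : ∀ a b : Fin 4, a < b → hi a < lo b := by
    intro a b hab
    fin_cases a <;> fin_cases b <;>
      simp only [hlo, hhi, Fin.lt_def] at hab ⊢ <;>
      simp at hab ⊢ <;> omega
  have hB'' : ∀ t ∈ R, ∃ w : Fin 4 → (Fin (d+1) → Fin n),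
      (∀ a, w a ∈ M) ∧ (∀ a, Fin.tail (w a) = t) ∧
      (∀ a : Fin 4, lo a ≤ (w a 0 : ℕ) ∧ (w a 0 : ℕ) ≤ hi a) := by
    intro t ht
    obtain ⟨⟨y1, hy1, e1⟩, ⟨y2, hy2, e2a, e2b⟩, ⟨y3, hy3, e3a, e3b⟩,
      ⟨y4, hy4, e4⟩⟩ := hB t ht
    obtain ⟨v1, hv1, hval1, htl1⟩ := hS y1 t hy1
    obtain ⟨v2, hv2, hval2, htl2⟩ := hS y2 t hy2
    obtain ⟨v3, hv3, hval3, htl3⟩ := hS y3 t hy3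
    obtain ⟨v4, hv4, hval4, htl4⟩ := hS y4 t hy4
    refine ⟨![v1, v2, v3, v4], ?_, ?_, ?_⟩
    · intro a
      fin_cases a <;> simp <;> assumption
    · intro a
      fin_cases a <;> simp [htl1, htl2, htl3, htl4]
    · intro a
      have hb4 : (v4 0 : ℕ) ≤ n := le_of_lt (v4 0).isLt
      fin_cases a <;> simp [hlo, hhi] <;> omega
  choose w hwM hwtl hwval using hB''
  set G : Fin 4 → Finset (Fin (d+1) → Fin n) :=
    fun a => R.attach.image (fun t => w t.1 t.2 a) with hGdef
  have hmemG : ∀ a u, u ∈ G a ↔ ∃ (t : _) (ht : t ∈ R), u = w t ht a := by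
    intro a u
    simp only [hGdef, Finset.mem_image, Finset.mem_attach, true_and]
    constructor
    · rintro ⟨t, rfl⟩; exact ⟨t.1, t.2, rfl⟩
    · rintro ⟨t, ht, rfl⟩; exact ⟨⟨t, ht⟩, rfl⟩
  have himg : ∀ a, (G a).image Fin.tail = R := by
    intro a
    rw [hGdef]
    rw [Finset.image_image]
    have he : (Fin.tail ∘ fun t : {x // x ∈ R} => w t.1 t.2 a) = fun t => t.1 :=
      funext fun t => hwtl t.1 t.2 a
    rw [he]
    exact R.attach_image_val
  have hcardG : ∀ a, (G a).card = R.card := by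
    intro a
    rw [hGdef]
    rw [Finset.card_image_of_injOn, Finset.card_attach]
    intro t _ t' _ hww
    have h2 : t.1 = t'.1 := by
      have h3 := congrArg Fin.tail hww
      simpa [hwtl] using h3
    exact Subtype.ext h2
  have hRcard : R.card = P.card := by
    rw [hRim]
    exact Finset.card_image_of_injective _ (gmap_inj g hg)
  refine ⟨G, ⟨?_, ⟨g, hg, ?_⟩, ?_⟩, ?_⟩
  · intro a; rw [hcardG a, hRcard]
  · intro a; rw [himg a, hRim]
  · intro a b hab pp hpp qq hqq
    obtain ⟨t, ht, rfl⟩ := (hmemG a pp).mp hpp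
    obtain ⟨t', ht', rfl⟩ := (hmemG b qq).mp hqq
    have h1 := (hwval t ht a).2
    have h2 := (hwval t' ht' b).1
    have h3 := hchain a b hab
    exact Fin.lt_def.mpr (by omega)
  · intro a u hu
    obtain ⟨t, ht, rfl⟩ := (hmemG a u).mp hu
    exact hwM t ht a

lemma card_S_eq (M : Finset (Fin (d+1) → Fin n)) :
    (M.image (fun v => ((v 0 : ℕ), Fin.tail v))).card = M.card := by
  apply Finset.card_image_of_injective
  intro a b h
  have h0 : (a 0 : ℕ) = (b 0 : ℕ) := congrArg Prod.fst h
  have ht : Fin.tail a = Fin.tail b := congrArg Prod.snd h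
  have h0' : a 0 = b 0 := Fin.val_injective h0
  calc a = Fin.cons (a 0) (Fin.tail a) := (Fin.cons_self_tail a).symm
    _ = Fin.cons (b 0) (Fin.tail b) := by rw [h0', ht]
    _ = b := Fin.cons_self_tail b

lemma hyperplane_bound (P : Finset ((i : Fin d) → Fin (pdims i)))
    (hd : 0 < d) (hP : 2 ≤ P.card) (hn : 0 < n) :
    n ^ d ≤ n * exSq n P := by
  classical
  obtain ⟨a, ha, b, hb, hab⟩ := Finset.one_lt_card.mp (show 1 < P.card by omega)
  obtain ⟨i₀, hi₀⟩ := Function.ne_iff.mp hab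
  set z : Fin n := ⟨0, hn⟩ with hz
  set W : Finset (Fin d → Fin n) := Finset.univ.filter (fun v => v i₀ = z) with hW
  have hWfree : ∀ R ⊆ W, ¬ DangerP P n R := by
    rintro R hRW ⟨g, hg, hRim⟩
    have haR : (fun i => g i (a i)) ∈ R := by
      rw [hRim]; exact Finset.mem_image_of_mem _ ha
    have hbR : (fun i => g i (b i)) ∈ R := by
      rw [hRim]; exact Finset.mem_image_of_mem _ hb
    have haW := Finset.mem_filter.mp (hRW haR)
    have hbW := Finset.mem_filter.mp (hRW hbR)
    have e1 : g i₀ (a i₀) = z := haW.2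
    have e2 : g i₀ (b i₀) = z := hbW.2
    exact hi₀ ((hg i₀).injective (e1.trans e2.symm))
  have hWE : W.card ≤ exSq n P := HE_P P W hWfree
  have hinj : n ^ d ≤ n * W.card := by
    have hmap : ∀ v : Fin d → Fin n,
        (v i₀, Function.update v i₀ z) ∈ (Finset.univ : Finset (Fin n)) ×ˢ W := by
      intro v
      rw [Finset.mem_product]
      refine ⟨Finset.mem_univ _, Finset.mem_filter.mpr ⟨Finset.mem_univ _, ?_⟩⟩
      simp
    have hinjective : Set.InjOn (fun v : Fin d → Fin n => (v i₀, Function.update v i₀ z))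
        (Finset.univ : Finset (Fin d → Fin n)) := by
      intro u _ v _ h
      have h1 : u i₀ = v i₀ := congrArg Prod.fst h
      have h2 : Function.update u i₀ z = Function.update v i₀ z := congrArg Prod.snd h
      have : Function.update (Function.update u i₀ z) i₀ (u i₀)
          = Function.update (Function.update v i₀ z) i₀ (v i₀) := by rw [h1, h2]
      rwa [Function.update_idem, Function.update_idem, Function.update_eq_self,
        Function.update_eq_self] at this
    calc n ^ d = (Finset.univ : Finset (Fin d → Fin n)).card := by
          rw [Finset.card_univ, Fintype.card_fun, Fintype.card_fin, Fintype.card_fin]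
      _ ≤ ((Finset.univ : Finset (Fin n)) ×ˢ W).card :=
          Finset.card_le_card_of_injOn _ (fun v _ => hmap v) hinjective
      _ = n * W.card := by
          rw [Finset.card_product, Finset.card_univ, Fintype.card_fin]
  calc n ^ d ≤ n * W.card := hinj
    _ ≤ n * exSq n P := Nat.mul_le_mul_left _ hWE

end Inst

lemma alphA_spec {n : ℕ} (hn : 0 < n) : 1 ≤ alphA n ∧ n ≤ ack (alphA n) (alphA n) := by
  have hne : {k | 1 ≤ k ∧ n ≤ ack k k}.Nonempty :=
    ⟨n, ⟨by omega, le_of_lt (lt_ack_right n n)⟩⟩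
  have h := Nat.sInf_mem hne
  exact h

theorem stmt11' {d : ℕ} (hd : 0 < d) {pdims : Fin d → ℕ}
    (P : Finset ((i : Fin d) → Fin (pdims i))) (hP : 2 ≤ P.card) :
    ∃ C : ℕ, 0 < C ∧ ∀ n : ℕ, 0 < n →
      exFormation n P 4 ≤ C * n * alphA n * exSq n P := by
  refine ⟨168, by omega, fun n hn => ?_⟩
  classical
  obtain ⟨hα1, hαack⟩ := alphA_spec hn
  set α := alphA n with hα
  set E := exSq n P with hE
  have hhf : n ≤ hf (2*α+2) 3 := by
    have h1 : ack α α + 3 ≤ hf (α+2) (α+3) := ack_le_hf α α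
    have h2 : hf (α+2) (α+3) ≤ hf ((α+2)+α) 3 := hf_diag α (α+2) (by omega)
    have h3 : (α+2)+α = 2*α+2 := by omega
    rw [h3] at h2
    omega
  have hbound : ∀ M : Finset (Fin (d+1) → Fin n), ¬ ContainsFormation P 4 M →
      M.card ≤ 168 * n * α * E := by
    intro M hM
    set S := M.image (fun v => ((v 0 : ℕ), Fin.tail v)) with hS
    have hwin : ∀ c ∈ S, 0 ≤ c.1 ∧ c.1 < 0 + n := by
      intro c hc
      obtain ⟨v, hv, rfl⟩ := Finset.mem_image.mp hc
      exact ⟨Nat.zero_le _, by simpa using (v 0).isLt⟩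
    have hgood := good_of_formation_free P M hM
    have hcore := core_bound (HE_P P) (2*α+2) (by omega) 3 (by omega) n 0 S hhf hwin hgood
    have hrows : (S.image Prod.snd).card ≤ n ^ d := by
      calc (S.image Prod.snd).card ≤ Fintype.card (Fin d → Fin n) :=
            le_trans (Finset.card_le_univ _) (le_of_eq Finset.card_univ)
        _ = n ^ d := by rw [Fintype.card_fun, Fintype.card_fin, Fintype.card_fin]
    have hnd : n ^ d ≤ n * E := hyperplane_bound P hd hP hn
    have hcS : S.card = M.card := card_S_eq M
    have t4 : 6*(2*α+2)*(S.image Prod.snd).card ≤ 6*(2*α+2)*(n*E) :=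
      Nat.mul_le_mul_left _ (le_trans hrows hnd)
    have e1 : 12*(2*α+2)*3*E*n = (72*α+72)*(n*E) := by ring
    have e2 : 6*(2*α+2)*(n*E) = (12*α+12)*(n*E) := by ring
    have e4 : (84*α+84)*(n*E) ≤ (168*α)*(n*E) := Nat.mul_le_mul_right _ (by omega)
    have e5 : (168*α)*(n*E) = 168*n*α*E := by ring
    have e6 : (72*α+72)*(n*E) + (12*α+12)*(n*E) = (84*α+84)*(n*E) := by ring
    calc M.card = S.card := hcS.symm
      _ ≤ 12*(2*α+2)*3*E*n + 6*(2*α+2)*(S.image Prod.snd).card := hcore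
      _ ≤ (72*α+72)*(n*E) + (12*α+12)*(n*E) :=
          Nat.add_le_add (le_of_eq e1) (t4.trans (le_of_eq e2))
      _ = (84*α+84)*(n*E) := e6
      _ ≤ (168*α)*(n*E) := e4
      _ = 168*n*α*E := e5
  show exFormation n P 4 ≤ 168 * n * α * E
  unfold exFormation
  apply csSup_le
  · refine ⟨0, ⟨∅, ?_, Finset.card_empty⟩⟩
    rintro ⟨G, ⟨hcards, -, -⟩, hsub⟩
    have h0 : G 0 = ∅ := Finset.subset_empty.mp (hsub 0)
    have := hcards 0
    rw [h0, Finset.card_empty] at this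
    omega
  · rintro k ⟨M, hM, rfl⟩
    exact hbound M hM


/-- `ex(n, F_{P,4}, d+1) ≤ C · n · α(n) · ex(n, P, d)`. -/
theorem stmt11 {d : ℕ} (hd : 0 < d) {pdims : Fin d → ℕ}
    (P : Finset ((i : Fin d) → Fin (pdims i))) (hP : 2 ≤ P.card) :
    ∃ C : ℕ, 0 < C ∧ ∀ n : ℕ, 0 < n →
      exFormation n P 4 ≤ C * n * alphA n * exSq n P :=
  stmt11' hd P hP
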